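/- For any integers 1 ≤ d ≤ m and reals x_1,…,x_d ∈ [0,1], the power mean M_{1/γ_m}(x_1,…,x_d) = ((x_1^{1/γ_m}+⋯+x_d^{1/γ_m})/d)^{γ_m} is at most the max-choice average (1/d²)·Σ_{i=1}^d Σ_{j=1}^d max(x_i,x_j), where γ_m = log_m(m²/(2m−1)). -/

import Mathlib

open Real Finset

lemma pmc_bernoulli {b lam : ℝ} (hb : 0 ≤ b) (h0 : 0 ≤ lam) (h1 : lam ≤ 1) :
    b ^ lam ≤ 1 + lam * (b - 1) := by
  have := rpow_one_add_le_one_add_mul_self (s := b - 1) (by linarith) h0 h1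
  simpa using this

lemma pmc_key {m c d : ℝ} (hm : 2 ≤ m) (hc : 1 ≤ c) (hcd : c ≤ d) (hdm : d ≤ m) :
    (c / d) ^ (Real.log (m ^ 2 / (2 * m - 1)) / Real.log m) ≤ c * (2 * d - c) / d ^ 2 := by
  have hc0 : (0:ℝ) < c := by linarith
  have hd0 : (0:ℝ) < d := by linarith
  have hm1 : (1:ℝ) < m := by linarith
  have hM : 0 < Real.log m := Real.log_pos hm1
  set G : ℝ := Real.log (m ^ 2 / (2 * m - 1)) / Real.log m with hGdef
  set s : ℝ := d / c with hs
  have hs1 : 1 ≤ s := (one_le_div hc0).2 hcd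
  have hs0 : (0:ℝ) < s := by linarith
  have hsm : s ≤ m := by rw [hs, div_le_iff₀ hc0]; nlinarith
  set lam : ℝ := Real.log s / Real.log m with hlam
  have hlam0 : 0 ≤ lam := div_nonneg (Real.log_nonneg hs1) hM.le
  have hlam1 : lam ≤ 1 := by
    rw [hlam, div_le_one hM]
    exact Real.log_le_log hs0 hsm
  have hminv : (0:ℝ) < m⁻¹ := by positivity
  have hminv1 : m⁻¹ ≤ 1 := by rw [inv_le_one_iff₀]; right; linarith
  have h2m : (0:ℝ) < 2 - m⁻¹ := by linarith
  have h2m1 : (0:ℝ) < 2 * m - 1 := by linarith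
  have key1 : s⁻¹ = m⁻¹ ^ lam := by
    rw [Real.rpow_def_of_pos hminv, Real.log_inv, hlam]
    rw [show -Real.log m * (Real.log s / Real.log m) = -Real.log s by field_simp]
    rw [Real.exp_neg, Real.exp_log hs0]
  have key2 : s ^ (1 - G) = (2 - m⁻¹) ^ lam := by
    rw [Real.rpow_def_of_pos hs0, Real.rpow_def_of_pos h2m]
    congr 1
    have hlr : Real.log (m ^ 2 / (2 * m - 1)) = 2 * Real.log m - Real.log (2 * m - 1) := by
      rw [Real.log_div (by positivity) (by positivity), Real.log_pow]
      push_cast; ring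
    have hl2 : Real.log (2 - m⁻¹) = Real.log (2 * m - 1) - Real.log m := by
      rw [show (2:ℝ) - m⁻¹ = (2 * m - 1) / m by field_simp,
        Real.log_div (by positivity) (by positivity)]
    rw [hGdef, hlam, hlr, hl2]
    field_simp
    ring
  have hb1 := pmc_bernoulli h2m.le hlam0 hlam1
  have hb2 := pmc_bernoulli hminv.le hlam0 hlam1
  have hmain : s ^ (1 - G) ≤ 2 - s⁻¹ := by
    rw [key2, key1]; linarith
  have hrw : (c / d) ^ G = s⁻¹ * s ^ (1 - G) := by
    have h1 : c / d = s⁻¹ := by rw [hs, inv_div]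
    have h2 : s⁻¹ * s ^ (1 - G) = s ^ (-1 + (1 - G)) := by
      rw [Real.rpow_add hs0, Real.rpow_neg_one]
    rw [h1, h2, show (-1 + (1 - G)) = -G by ring, Real.rpow_neg hs0.le,
      Real.inv_rpow hs0.le]
  rw [hrw]
  have : s⁻¹ * s ^ (1 - G) ≤ s⁻¹ * (2 - s⁻¹) :=
    mul_le_mul_of_nonneg_left hmain (by positivity)
  refine this.trans (le_of_eq ?_)
  have h3 : s⁻¹ = c / d := by rw [hs, inv_div]
  rw [h3, div_mul_eq_mul_div, mul_sub, mul_two]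
  rw [show c * (2 * d - c) / d ^ 2 = (c * (2 * d - c) / d) / d by ring]
  congr 1
  field_simp
  ring

lemma pmc_minkowski {ι : Type*} [DecidableEq ι] {d : ℕ} (s : Finset ι) (f : ι → Fin d → ℝ) {p : ℝ} (hp : 1 ≤ p)
    (hf : ∀ k ∈ s, ∀ i, 0 ≤ f k i) :
    (∑ i, (∑ k ∈ s, f k i) ^ p) ^ (1 / p) ≤ ∑ k ∈ s, (∑ i, f k i ^ p) ^ (1 / p) := by
  have hp0 : p ≠ 0 := by positivity
  induction s using Finset.induction with
  | empty => simp [Real.zero_rpow hp0, Real.zero_rpow (inv_ne_zero hp0)]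
  | @insert a s hnot ih =>
    rw [Finset.sum_insert hnot]
    have hstep : ∀ i : Fin d, ∑ k ∈ insert a s, f k i = f a i + ∑ k ∈ s, f k i := fun i =>
      Finset.sum_insert hnot
    simp_rw [hstep]
    have h1 := Real.Lp_add_le_of_nonneg (s := (Finset.univ : Finset (Fin d)))
      (f := fun i => f a i) (g := fun i => ∑ k ∈ s, f k i) hp
      (fun i _ => hf a (Finset.mem_insert_self a s) i)
      (fun i _ => Finset.sum_nonneg fun k hk => hf k (Finset.mem_insert_of_mem hk) i)
    have h2 := ih (fun k hk i => hf k (Finset.mem_insert_of_mem hk) i)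
    calc (∑ i, (f a i + ∑ k ∈ s, f k i) ^ p) ^ (1 / p)
        ≤ (∑ i, f a i ^ p) ^ (1 / p) + (∑ i, (∑ k ∈ s, f k i) ^ p) ^ (1 / p) := h1
      _ ≤ (∑ i, f a i ^ p) ^ (1 / p) + ∑ k ∈ s, (∑ i, f k i ^ p) ^ (1 / p) := by linarith


noncomputable def pmcY {d : ℕ} (y : Fin d → ℝ) : ℕ → ℝ := fun n => if h : n < d then y ⟨n, h⟩ else 0
noncomputable def pmcG {d : ℕ} (y : Fin d → ℝ) : ℕ → ℝ := fun n => if n = 0 then 0 else pmcY y (n - 1)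
noncomputable def pmcT {d : ℕ} (y : Fin d → ℝ) : ℕ → ℝ := fun k => pmcG y (k + 1) - pmcG y k

lemma pmcT_nonneg {d : ℕ} {y : Fin d → ℝ} (hy0 : ∀ i, 0 ≤ y i) (hmono : Monotone y)
    {k : ℕ} (hk : k < d) : 0 ≤ pmcT y k := by
  match k with
  | 0 =>
    simp only [pmcT, pmcG, pmcY]
    simp [hk]
    exact hy0 _
  | Nat.succ j =>
    have hj : j < d := Nat.lt_of_succ_lt hk
    simp only [pmcT, pmcG, pmcY]
    simp only [Nat.succ_ne_zero, if_neg, Nat.add_sub_cancel, Nat.succ_sub_one]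
    rw [dif_pos hk, dif_pos hj]
    simp only [sub_nonneg]
    exact hmono (by simp [Fin.le_def])

lemma pmcY_eq {d : ℕ} (y : Fin d → ℝ) (i : Fin d) :
    y i = ∑ k ∈ Finset.range (i.1 + 1), pmcT y k := by
  have h := Finset.sum_range_sub (pmcG y) (i.1 + 1)
  have h2 : pmcG y (i.1 + 1) = y i := by
    simp [pmcG, pmcY, i.isLt]
  have h0 : pmcG y 0 = 0 := by simp [pmcG]
  calc y i = pmcG y (i.1 + 1) - pmcG y 0 := by rw [h2, h0, sub_zero]
    _ = ∑ k ∈ Finset.range (i.1 + 1), pmcT y k := h.symm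

lemma pmc_layer {d : ℕ} (y : Fin d → ℝ) (i : Fin d) :
    y i = ∑ k ∈ Finset.range d, (if k ≤ i.1 then pmcT y k else 0) := by
  rw [pmcY_eq y i]
  rw [Finset.sum_congr rfl (g := fun k => if k ≤ i.1 then pmcT y k else 0)
    (fun k hk => (if_pos (Nat.lt_succ_iff.1 (Finset.mem_range.1 hk))).symm)]
  exact Finset.sum_subset (Finset.range_subset_range.2 i.isLt)
    (fun k _ hk' => if_neg (fun hle => hk' (Finset.mem_range.2 (Nat.lt_succ_iff.2 hle))))

lemma pmc_count_ge (k d : ℕ) (c : ℝ) :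
    ∑ i : Fin d, (if k ≤ i.1 then c else 0) = ((d - k : ℕ) : ℝ) * c := by
  rw [Fin.sum_univ_eq_sum_range (fun n => if k ≤ n then c else 0)]
  rw [← Finset.sum_filter]
  rw [show (Finset.range d).filter (fun n => k ≤ n) = Finset.Ico k d by
    ext a; simp [Finset.mem_filter, Finset.mem_range, Finset.mem_Ico]; omega]
  rw [Finset.sum_const, Nat.card_Ico, nsmul_eq_mul]

lemma pmc_count_lt (k d : ℕ) (hk : k ≤ d) (c : ℝ) :
    ∑ i : Fin d, (if i.1 < k then c else 0) = (k : ℝ) * c := by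
  rw [Fin.sum_univ_eq_sum_range (fun n => if n < k then c else 0)]
  rw [← Finset.sum_filter]
  rw [show (Finset.range d).filter (fun n => n < k) = Finset.range k by
    ext a; simp [Finset.mem_filter, Finset.mem_range]; omega]
  rw [Finset.sum_const, Finset.card_range, nsmul_eq_mul]

lemma pmc_layer_norm {k d : ℕ} (hkd : k < d) {p : ℝ} (hp : 1 ≤ p) {c : ℝ} (hc : 0 ≤ c) :
    (∑ i : Fin d, (if k ≤ i.1 then c else 0) ^ p) ^ (1 / p) = ((d - k : ℕ) : ℝ) ^ (1 / p) * c := by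
  have hp0 : p ≠ 0 := by positivity
  have he : ∀ i : Fin d, (if k ≤ i.1 then c else 0) ^ p = if k ≤ i.1 then c ^ p else 0 := by
    intro i; split <;> simp [Real.zero_rpow hp0]
  simp_rw [he]
  rw [pmc_count_ge k d (c ^ p)]
  rw [Real.mul_rpow (by positivity) (by positivity)]
  congr 1
  rw [← Real.rpow_mul hc, mul_one_div_cancel hp0, Real.rpow_one]

lemma pmc_rhs {d : ℕ} (y : Fin d → ℝ) (hmono : Monotone y) :
    ∑ i : Fin d, ∑ j : Fin d, max (y i) (y j)
      = ∑ k ∈ Finset.range d, (((d : ℝ) ^ 2 - (k : ℝ) ^ 2) * pmcT y k) := by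
  have hmax : ∀ i j : Fin d, max (y i) (y j)
      = ∑ k ∈ Finset.range d, (if k ≤ i.1 ∨ k ≤ j.1 then pmcT y k else 0) := by
    intro i j
    rcases le_total i j with h | h
    · rw [max_eq_right (hmono h), pmc_layer y j]
      refine Finset.sum_congr rfl fun k _ => ?_
      exact (if_congr ⟨fun h' => h'.elim (fun hk => hk.trans (Fin.le_def.1 h)) id, Or.inr⟩
        rfl rfl).symm
    · rw [max_eq_left (hmono h), pmc_layer y i]
      refine Finset.sum_congr rfl fun k _ => ?_
      exact (if_congr ⟨fun h' => h'.elim id (fun hk => hk.trans (Fin.le_def.1 h)), Or.inl⟩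
        rfl rfl).symm
  calc ∑ i : Fin d, ∑ j : Fin d, max (y i) (y j)
      = ∑ i : Fin d, ∑ j : Fin d, ∑ k ∈ Finset.range d,
          (if k ≤ i.1 ∨ k ≤ j.1 then pmcT y k else 0) :=
        Finset.sum_congr rfl fun i _ => Finset.sum_congr rfl fun j _ => hmax i j
    _ = ∑ i : Fin d, ∑ k ∈ Finset.range d, ∑ j : Fin d,
          (if k ≤ i.1 ∨ k ≤ j.1 then pmcT y k else 0) :=
        Finset.sum_congr rfl fun i _ => Finset.sum_comm
    _ = ∑ k ∈ Finset.range d, ∑ i : Fin d, ∑ j : Fin d,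
          (if k ≤ i.1 ∨ k ≤ j.1 then pmcT y k else 0) := Finset.sum_comm
    _ = ∑ k ∈ Finset.range d, (((d : ℝ) ^ 2 - (k : ℝ) ^ 2) * pmcT y k) := by
        refine Finset.sum_congr rfl fun k hk => ?_
        have hkd : k < d := Finset.mem_range.1 hk
        set T := pmcT y k with hT
        have hsplit : ∀ i j : Fin d, (if k ≤ i.1 ∨ k ≤ j.1 then T else 0)
            = T - (if i.1 < k then (1:ℝ) else 0) * (if j.1 < k then T else 0) := by
          intro i j
          by_cases h1 : k ≤ i.1 <;> by_cases h2 : k ≤ j.1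
          · rw [if_pos (Or.inl h1), if_neg (not_lt.2 h1)]; ring
          · rw [if_pos (Or.inl h1), if_neg (not_lt.2 h1)]; ring
          · rw [if_pos (Or.inr h2), if_pos (not_le.1 h1), if_neg (not_lt.2 h2)]; ring
          · rw [if_neg (by tauto), if_pos (not_le.1 h1), if_pos (not_le.1 h2)]; ring
        simp_rw [hsplit]
        have hinner : ∀ i : Fin d, ∑ j : Fin d,
            (T - (if i.1 < k then (1:ℝ) else 0) * (if j.1 < k then T else 0))
            = (d : ℝ) * T - (if i.1 < k then (1:ℝ) else 0) * ((k : ℝ) * T) := by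
          intro i
          rw [Finset.sum_sub_distrib, Finset.sum_const, Finset.card_univ, Fintype.card_fin,
            ← Finset.mul_sum, pmc_count_lt k d hkd.le T, nsmul_eq_mul]
        simp_rw [hinner]
        rw [Finset.sum_sub_distrib, Finset.sum_const, Finset.card_univ, Fintype.card_fin,
          ← Finset.sum_mul, pmc_count_lt k d hkd.le (1:ℝ), nsmul_eq_mul]
        ring


lemma pmc_sorted (m d : ℕ) (hm : 2 ≤ m) (hd : 1 ≤ d) (hdm : d ≤ m)
    (y : Fin d → ℝ) (hy0 : ∀ i, 0 ≤ y i) (hmono : Monotone y) :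
    ((∑ i, y i ^ (Real.log ((m : ℝ) ^ 2 / (2 * m - 1)) / Real.log m)⁻¹) / (d : ℝ)) ^
        (Real.log ((m : ℝ) ^ 2 / (2 * m - 1)) / Real.log m) ≤
      (1 / (d : ℝ) ^ 2) * ∑ i, ∑ j, max (y i) (y j) := by
  have hm2 : (2:ℝ) ≤ (m:ℝ) := by exact_mod_cast hm
  have hm1 : (1:ℝ) < m := by linarith
  have hM : 0 < Real.log m := Real.log_pos hm1
  have h2m1 : (0:ℝ) < 2 * m - 1 := by linarith
  have hd0 : (0:ℝ) < d := by exact_mod_cast hd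
  set G : ℝ := Real.log ((m : ℝ) ^ 2 / (2 * m - 1)) / Real.log m with hGdef
  have hrat1 : (1:ℝ) < (m:ℝ) ^ 2 / (2 * m - 1) := by
    rw [lt_div_iff₀ h2m1]; nlinarith
  have hG0 : 0 < G := div_pos (Real.log_pos hrat1) hM
  have hG1 : G ≤ 1 := by
    rw [hGdef, div_le_one hM]
    apply Real.log_le_log (by positivity)
    rw [div_le_iff₀ h2m1]; nlinarith
  have hp1 : (1:ℝ) ≤ G⁻¹ := by
    rw [show G⁻¹ = 1 / G from (one_div G).symm, le_div_iff₀ hG0]; linarith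
  have hTnn : ∀ k ∈ Finset.range d, 0 ≤ pmcT y k := fun k hk =>
    pmcT_nonneg hy0 hmono (Finset.mem_range.1 hk)
  -- Minkowski on layers
  have hmink := pmc_minkowski (d := d) (Finset.range d)
    (fun k i => if k ≤ i.1 then pmcT y k else 0) hp1
    (fun k hk i => by
      by_cases h : k ≤ i.1
      · simpa [h] using hTnn k hk
      · simp [h])
  simp_rw [← pmc_layer y] at hmink
  rw [Finset.sum_congr rfl (fun k hk =>
    pmc_layer_norm (Finset.mem_range.1 hk) hp1 (hTnn k hk))] at hmink
  have h1p : 1 / G⁻¹ = G := by rw [one_div, inv_inv]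
  rw [h1p] at hmink
  have hsums : 0 ≤ ∑ i, y i ^ G⁻¹ :=
    Finset.sum_nonneg fun i _ => Real.rpow_nonneg (hy0 i) _
  calc ((∑ i, y i ^ G⁻¹) / (d : ℝ)) ^ G
      = (∑ i, y i ^ G⁻¹) ^ G / (d : ℝ) ^ G := Real.div_rpow hsums hd0.le G
    _ ≤ (∑ k ∈ Finset.range d, ((d - k : ℕ) : ℝ) ^ G * pmcT y k) / (d : ℝ) ^ G := by
        gcongr
    _ = ∑ k ∈ Finset.range d, (((d - k : ℕ) : ℝ) / (d : ℝ)) ^ G * pmcT y k := by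
        rw [Finset.sum_div]
        refine Finset.sum_congr rfl fun k _ => ?_
        rw [Real.div_rpow (by positivity) hd0.le]
        ring
    _ ≤ ∑ k ∈ Finset.range d, (((d:ℝ)^2 - (k:ℝ)^2) / (d:ℝ)^2) * pmcT y k := by
        refine Finset.sum_le_sum fun k hk => ?_
        have hkd : k < d := Finset.mem_range.1 hk
        refine mul_le_mul_of_nonneg_right ?_ (hTnn k hk)
        have hcast : ((d - k : ℕ) : ℝ) = (d:ℝ) - (k:ℝ) := by
          push_cast [Nat.cast_sub hkd.le]; ring
        have hkd' : (k:ℝ) + 1 ≤ (d:ℝ) := by exact_mod_cast hkd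
        have hdm' : (d:ℝ) ≤ (m:ℝ) := by exact_mod_cast hdm
        have hkey := pmc_key (m := (m:ℝ)) (c := (d:ℝ) - (k:ℝ)) (d := (d:ℝ))
          hm2 (by linarith) (by linarith [(by positivity : (0:ℝ) ≤ (k:ℝ))]) hdm'
        rw [hcast]
        rw [← hGdef] at hkey
        refine hkey.trans (le_of_eq (by ring))
    _ = (1 / (d : ℝ) ^ 2) * ∑ i, ∑ j, max (y i) (y j) := by
        rw [pmc_rhs y hmono, Finset.mul_sum]
        exact Finset.sum_congr rfl fun k _ => by ring

/-- For integers `1 ≤ d ≤ m` (with `m ≥ 2`) and reals `x₁, …, x_d ∈ [0,1]`, the power mean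
`M_{1/γ_m}(x₁,…,x_d) = ((x₁^{1/γ_m} + ⋯ + x_d^{1/γ_m})/d)^{γ_m}` is at most the max-choice
average `(1/d²) ∑ᵢ ∑ⱼ max (xᵢ) (xⱼ)`, where `γ_m = log_m (m²/(2m-1))`. -/
theorem powerMean_le_maxChoice (m d : ℕ) (hm : 2 ≤ m) (hd : 1 ≤ d) (hdm : d ≤ m)
    (x : Fin d → ℝ) (hx : ∀ i, x i ∈ Set.Icc (0 : ℝ) 1) :
    ((∑ i, x i ^ (Real.log ((m : ℝ) ^ 2 / (2 * m - 1)) / Real.log m)⁻¹) / (d : ℝ)) ^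
        (Real.log ((m : ℝ) ^ 2 / (2 * m - 1)) / Real.log m) ≤
      (1 / (d : ℝ) ^ 2) * ∑ i, ∑ j, max (x i) (x j) := by
  set σ := Tuple.sort x with hσ
  have hmono : Monotone (x ∘ σ) := Tuple.monotone_sort x
  set G : ℝ := Real.log ((m : ℝ) ^ 2 / (2 * m - 1)) / Real.log m with hGdef
  have h1 : ∑ i, x i ^ G⁻¹ = ∑ i, (x ∘ σ) i ^ G⁻¹ :=
    (Equiv.sum_comp σ fun i => x i ^ G⁻¹).symm
  have h2 : ∑ i, ∑ j, max (x i) (x j) = ∑ i, ∑ j, max ((x ∘ σ) i) ((x ∘ σ) j) := by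
    calc ∑ i, ∑ j, max (x i) (x j)
        = ∑ i, ∑ j, max (x (σ i)) (x j) :=
          (Equiv.sum_comp σ (fun i => ∑ j, max (x i) (x j))).symm
      _ = ∑ i, ∑ j, max (x (σ i)) (x (σ j)) :=
          Finset.sum_congr rfl fun i _ => (Equiv.sum_comp σ fun j => max (x (σ i)) (x j)).symm
  rw [h1, h2]
  exact pmc_sorted m d hm hd hdm (x ∘ σ) (fun i => (hx _).1) hmono
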